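/- Let d be the discriminant of an order O_d in an imaginary quadratic field K in which the prime p splits, and assume O_d^× = {±1}. Let 𝔭 be a prime of O_d above p, let k be the order of the class of 𝔭 in the Picard group of O_d, and write 𝔭^k = uO_d. Then the unit group of the ℤ[1/p]-order O = O_d[1/p] is generated by O_d^×, u and p; i.e. O^× = ⟨±1, u, p⟩. -/

import Mathlib

private lemma span_cancel' {R : Type*} [CommRing R] [IsDomain R] {c : R} (hc : c ≠ 0) {I J : Ideal R}
    (h : Ideal.span {c} * I = Ideal.span {c} * J) : I = J := by
  ext z
  constructor <;> intro hz
  · have : c * z ∈ Ideal.span {c} * J := h ▸ Ideal.mul_mem_mul (Ideal.mem_span_singleton_self c) hz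
    obtain ⟨y, hy, hyz⟩ := Ideal.mem_span_singleton_mul.mp this
    exact (mul_left_cancel₀ hc hyz) ▸ hy
  · have : c * z ∈ Ideal.span {c} * I := h.symm ▸ Ideal.mul_mem_mul (Ideal.mem_span_singleton_self c) hz
    obtain ⟨y, hy, hyz⟩ := Ideal.mem_span_singleton_mul.mp this
    exact (mul_left_cancel₀ hc hyz) ▸ hy

/-- Let `K` be an imaginary quadratic field, `R = O_d ⊆ K` an order whose unit
group is `{±1}`, and `p` a prime that splits in `R` as `pR = 𝔭𝔭'`. Let `k` be the order of the
class of `𝔭` in the Picard group of `R` and write `𝔭^k = uR`. Then the unit group of the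
`ℤ[1/p]`-order `O = R[1/p]` is generated by `R^× = {±1}`, `u` and `p`. Membership in `O` is
expressed inside `K` as: `x ∈ O ↔ ∃ m, pᵐ·x ∈ R`. -/
theorem stmt7 {K : Type*} [Field K] [Algebra ℚ K]
    (hquad : Module.finrank ℚ K = 2)
    (himag : IsEmpty (K →+* ℝ))
    (R : Subring K)
    (hRunits : ∀ x : K, x ∈ R → x⁻¹ ∈ R → x = 1 ∨ x = -1)
    (p : ℕ) (hp : p.Prime)
    (𝔭 𝔭' : Ideal R) (h𝔭 : 𝔭.IsPrime) (h𝔭' : 𝔭'.IsPrime) (hne : 𝔭 ≠ 𝔭')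
    (hsplit : 𝔭 * 𝔭' = Ideal.span {(p : R)})
    (hfact : ∀ (x : R) (m : ℕ), (Ideal.span {(p : R)}) ^ m ≤ Ideal.span {x} →
        ∃ i j : ℕ, Ideal.span {x} = 𝔭 ^ i * 𝔭' ^ j)
    (k : ℕ) (hk : 0 < k) (u : R) (hu0 : (u : K) ≠ 0)
    (hu : 𝔭 ^ k = Ideal.span {u})
    (hmin : ∀ m : ℕ, 0 < m → (∃ v : R, 𝔭 ^ m = Ideal.span {v}) → k ∣ m) :
    ∀ x : K, x ≠ 0 →
      (((∃ m : ℕ, (p : K) ^ m * x ∈ R) ∧ (∃ m : ℕ, (p : K) ^ m * x⁻¹ ∈ R)) ↔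
        (∃ (ε : ℤˣ) (a b : ℤ), x = (ε : ℤ) * (u : K) ^ a * (p : K) ^ b)) := by
  haveI : CharZero K := charZero_of_injective_algebraMap (algebraMap ℚ K).injective
  have hpK : (p : K) ≠ 0 := Nat.cast_ne_zero.mpr hp.pos.ne'
  have hpRK : ((p : R) : K) = (p : K) := by push_cast; ring
  have hpR0 : (p : R) ≠ 0 := by
    intro h
    apply hpK
    rw [← hpRK, h, ZeroMemClass.coe_zero]
  -- units of R are ±1
  have hunit : ∀ v : R, IsUnit v → ((v : K) = 1 ∨ (v : K) = -1) := by
    intro v hv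
    obtain ⟨c, rfl⟩ := hv
    have h1 : ((c : R) : K) * ((c⁻¹ : Rˣ) : R) = 1 := by
      norm_cast
      simp
    have hinv : ((c : R) : K)⁻¹ = ((c⁻¹ : Rˣ) : R) := inv_eq_of_mul_eq_one_right h1
    exact hRunits _ (SetLike.coe_mem _) (hinv ▸ SetLike.coe_mem _)
  -- generators of equal principal ideals agree up to sign
  have hassoc : ∀ v w : R, Ideal.span {v} = Ideal.span {w} → ((v : K) = w ∨ (v : K) = -w) := by
    intro v w hvw
    obtain ⟨c, hc⟩ := Ideal.span_singleton_eq_span_singleton.mp hvw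
    rcases hunit c.val c.isUnit with h1 | h1
    · left; rw [← hc, Subring.coe_mul, h1, mul_one]
    · right; rw [← hc, Subring.coe_mul, h1]; ring
  -- u divides p^k
  have hupk : ∃ w : R, (p : R) ^ k = u * w := by
    apply Ideal.mem_span_singleton.mp
    rw [← hu]
    have h2 : (p : R) ^ k ∈ Ideal.span {(p:R)} ^ k := by
      rw [Ideal.span_singleton_pow]
      exact Ideal.mem_span_singleton_self _
    rw [← hsplit, mul_pow] at h2
    exact Ideal.mul_le_left h2
  obtain ⟨w, hw⟩ := hupk
  have hwK : (u : K) * w = (p : K) ^ k := by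
    have h3 := congrArg (fun z : R => (z : K)) hw
    push_cast at h3
    rw [← h3]
  intro x hx
  constructor
  · rintro ⟨⟨m, hm⟩, ⟨n, hn⟩⟩
    set r : R := ⟨(p:K)^m * x, hm⟩ with hrdef
    have hrK : (r : K) = (p:K)^m * x := rfl
    have hsK : ((⟨(p:K)^n * x⁻¹, hn⟩ : R) : K) = (p:K)^n * x⁻¹ := rfl
    have hrs : r * (⟨(p:K)^n * x⁻¹, hn⟩ : R) = (p : R) ^ (m + n) := by
      apply Subtype.ext
      show ((p:K)^m * x) * ((p:K)^n * x⁻¹) = (((p:R) ^ (m+n) : R) : K)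
      push_cast
      field_simp
      ring
    have hr0 : r ≠ 0 := by
      intro h
      have h4 : (r : K) = 0 := by rw [h, ZeroMemClass.coe_zero]
      rw [hrK] at h4
      rcases mul_eq_zero.mp h4 with h5 | h5
      · exact pow_ne_zero _ hpK h5
      · exact hx h5
    obtain ⟨i, j, hij⟩ := hfact r (m + n) (by
      rw [Ideal.span_singleton_pow]
      exact Ideal.span_singleton_le_span_singleton.mpr ⟨_, hrs.symm⟩)
    rcases le_or_gt j i with hji | hij2
    · -- case j ≤ i : x = ± u^c p^(j-m)
      have h1 : Ideal.span {r} = Ideal.span {(p:R) ^ j} * 𝔭 ^ (i - j) := by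
        have hpow : 𝔭 ^ i = 𝔭 ^ j * 𝔭 ^ (i - j) := by
          rw [← pow_add, Nat.add_sub_cancel' hji]
        rw [hij, hpow, ← Ideal.span_singleton_pow, ← hsplit, mul_pow]
        ring
      obtain ⟨v, hv⟩ : (p:R)^j ∣ r := by
        apply Ideal.mem_span_singleton.mp
        exact Ideal.mul_le_left (h1 ▸ Ideal.mem_span_singleton_self r)
      have h2 : Ideal.span {v} = 𝔭 ^ (i - j) := by
        apply span_cancel' (pow_ne_zero j hpR0)
        rw [← h1, hv, Ideal.span_singleton_mul_span_singleton]
      have hvK : (p:K)^m * x = (p:K)^j * (v : K) := by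
        rw [← hrK, hv]
        push_cast
        ring
      have hv0 : (v : K) ≠ 0 := by
        intro h5
        apply hr0
        apply Subtype.ext
        rw [hrK, hvK, h5, mul_zero, ZeroMemClass.coe_zero]
      have hxv : x = (p:K)^j * (v:K) / (p:K)^m := by
        rw [eq_div_iff (pow_ne_zero m hpK)]
        linear_combination hvK
      rcases Nat.eq_zero_or_pos (i - j) with ht | ht
      · -- trivial case : v is a unit
        rw [ht, pow_zero, Ideal.one_eq_top, Ideal.span_singleton_eq_top] at h2
        rcases hunit v h2 with h5 | h5
        · refine ⟨1, 0, (j : ℤ) - m, ?_⟩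
          rw [zpow_sub₀ hpK, hxv, h5]
          push_cast
          simp only [zpow_natCast, zpow_zero]
          field_simp
        · refine ⟨-1, 0, (j : ℤ) - m, ?_⟩
          rw [zpow_sub₀ hpK, hxv, h5]
          push_cast
          simp only [zpow_natCast, zpow_zero]
          field_simp
      · obtain ⟨c, hc⟩ := hmin (i - j) ht ⟨v, h2.symm⟩
        have h6 : Ideal.span {v} = Ideal.span {u ^ c} := by
          rw [h2, hc, pow_mul, hu, Ideal.span_singleton_pow]
        have huc : ((u ^ c : R) : K) = (u : K) ^ c := by push_cast; ring
        rcases hassoc v (u ^ c) h6 with h5 | h5 <;> rw [huc] at h5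
        · refine ⟨1, (c : ℤ), (j : ℤ) - m, ?_⟩
          rw [zpow_sub₀ hpK, hxv, h5]
          push_cast
          simp only [zpow_natCast, zpow_zero]
          field_simp
        · refine ⟨-1, (c : ℤ), (j : ℤ) - m, ?_⟩
          rw [zpow_sub₀ hpK, hxv, h5]
          push_cast
          simp only [zpow_natCast, zpow_zero]
          field_simp
    · -- case i < j : x = ± u^(-c) p^(i + t - m), t = j - i
      have h1 : Ideal.span {r} = Ideal.span {(p:R) ^ i} * 𝔭' ^ (j - i) := by
        have hpow : 𝔭' ^ j = 𝔭' ^ i * 𝔭' ^ (j - i) := by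
          rw [← pow_add, Nat.add_sub_cancel' hij2.le]
        rw [hij, hpow, ← Ideal.span_singleton_pow, ← hsplit, mul_pow]
        ring
      obtain ⟨v, hv⟩ : (p:R)^i ∣ r := by
        apply Ideal.mem_span_singleton.mp
        exact Ideal.mul_le_left (h1 ▸ Ideal.mem_span_singleton_self r)
      have h2 : Ideal.span {v} = 𝔭' ^ (j - i) := by
        apply span_cancel' (pow_ne_zero i hpR0)
        rw [← h1, hv, Ideal.span_singleton_mul_span_singleton]
      have hvK : (p:K)^m * x = (p:K)^i * (v : K) := by
        rw [← hrK, hv]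
        push_cast
        ring
      have hv0 : v ≠ 0 := by
        intro h5
        apply hr0
        apply Subtype.ext
        rw [hrK, hvK, h5, ZeroMemClass.coe_zero, mul_zero]
      set t := j - i with htdef
      have ht : 0 < t := Nat.sub_pos_of_lt hij2
      -- 𝔭^t * span{v} = span{p^t}
      have h3 : Ideal.span {v} * 𝔭 ^ t = Ideal.span {(p:R) ^ t} := by
        rw [h2, ← Ideal.span_singleton_pow, ← hsplit, mul_pow]
        ring
      obtain ⟨w', hw'⟩ : v ∣ (p:R)^t := by
        apply Ideal.mem_span_singleton.mp
        exact Ideal.mul_le_left (h3 ▸ Ideal.mem_span_singleton_self _)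
      have h4 : 𝔭 ^ t = Ideal.span {w'} := by
        apply span_cancel' hv0
        rw [Ideal.span_singleton_mul_span_singleton, ← hw']
        exact h3
      obtain ⟨c, hc⟩ := hmin t ht ⟨w', h4⟩
      have h6 : Ideal.span {w'} = Ideal.span {u ^ c} := by
        rw [← h4, hc, pow_mul, hu, Ideal.span_singleton_pow]
      have huc : ((u ^ c : R) : K) = (u : K) ^ c := by push_cast; ring
      have hvw' : (v : K) * (w' : K) = (p : K) ^ t := by
        have h7 := congrArg (fun z : R => (z : K)) hw'
        push_cast at h7
        rw [← h7]
      have hw'0 : (w' : K) ≠ 0 := by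
        intro h5
        apply pow_ne_zero t hpK
        rw [← hvw', h5, mul_zero]
      have hxv : x = (p:K)^i * (v:K) / (p:K)^m := by
        rw [eq_div_iff (pow_ne_zero m hpK)]
        linear_combination hvK
      have hveq : (v : K) = (p:K)^t / (w' : K) := by
        rw [eq_div_iff hw'0]
        linear_combination hvw'
      have huc0 : (u : K) ^ c ≠ 0 := pow_ne_zero _ hu0
      rcases hassoc w' (u ^ c) h6 with h5 | h5 <;> rw [huc] at h5 <;> rw [h5] at hveq
      · refine ⟨1, -(c : ℤ), (i : ℤ) + t - m, ?_⟩
        rw [show (i:ℤ) + t - m = ((i + t : ℕ) : ℤ) - (m : ℕ) by push_cast; ring]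
        rw [zpow_sub₀ hpK, zpow_natCast, zpow_natCast, zpow_neg, zpow_natCast, hxv, hveq]
        push_cast
        rw [pow_add]
        field_simp
      · refine ⟨-1, -(c : ℤ), (i : ℤ) + t - m, ?_⟩
        rw [show (i:ℤ) + t - m = ((i + t : ℕ) : ℤ) - (m : ℕ) by push_cast; ring]
        rw [zpow_sub₀ hpK, zpow_natCast, zpow_natCast, zpow_neg, zpow_natCast, hxv, hveq]
        push_cast
        rw [pow_add]
        field_simp
  · rintro ⟨ε, a, b, rfl⟩
    have hεK : ((ε : ℤ) : K) = 1 ∨ ((ε : ℤ) : K) = -1 := by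
      rcases Int.units_eq_one_or ε with h | h <;> simp [h]
    have hεR : ((ε : ℤ) : K) ∈ R := by
      rcases hεK with h | h <;> rw [h]
      · exact R.one_mem
      · exact R.neg_mem R.one_mem
    have hε0 : ((ε : ℤ) : K) ≠ 0 := by
      rcases hεK with h | h <;> rw [h] <;> norm_num
    have hpmem : (p : K) ∈ R := hpRK ▸ SetLike.coe_mem (p : R)
    have key : ∀ a b : ℤ, ∃ m : ℕ, (p : K) ^ m * (((ε : ℤ) : K) * (u : K) ^ a * (p : K) ^ b) ∈ R := by
      intro a b
      have hwpow : ∀ n : ℕ, (u : K) ^ n * (w : K) ^ n = (p : K) ^ (k * n) := by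
        intro n
        rw [← mul_pow, hwK, ← pow_mul]
      obtain ⟨n, rfl | rfl⟩ := a.eq_nat_or_neg <;> obtain ⟨n', rfl | rfl⟩ := b.eq_nat_or_neg
      · refine ⟨0, ?_⟩
        rw [pow_zero, one_mul, zpow_natCast, zpow_natCast]
        exact mul_mem (mul_mem hεR (pow_mem (SetLike.coe_mem u) n)) (pow_mem hpmem n')
      · refine ⟨n', ?_⟩
        have h8 : (p : K) ^ n' * (((ε : ℤ) : K) * (u : K) ^ (n : ℤ) * (p : K) ^ (-(n' : ℤ)))
            = ((ε : ℤ) : K) * (u : K) ^ n := by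
          rw [zpow_neg, zpow_natCast, zpow_natCast]
          field_simp
        rw [h8]
        exact mul_mem hεR (pow_mem (SetLike.coe_mem u) n)
      · refine ⟨k * n, ?_⟩
        have h8 : (p : K) ^ (k * n) * (((ε : ℤ) : K) * (u : K) ^ (-(n : ℤ)) * (p : K) ^ ((n' : ℕ) : ℤ))
            = ((ε : ℤ) : K) * (w : K) ^ n * (p : K) ^ n' := by
          rw [zpow_neg, zpow_natCast, zpow_natCast]
          have h9 := hwpow n
          field_simp
          linear_combination (-1 : K) * h9
        rw [h8]
        exact mul_mem (mul_mem hεR (pow_mem (SetLike.coe_mem w) n)) (pow_mem hpmem n')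
      · refine ⟨k * n + n', ?_⟩
        have h8 : (p : K) ^ (k * n + n') * (((ε : ℤ) : K) * (u : K) ^ (-(n : ℤ)) * (p : K) ^ (-(n' : ℤ)))
            = ((ε : ℤ) : K) * (w : K) ^ n := by
          rw [zpow_neg, zpow_neg, zpow_natCast, zpow_natCast]
          have h9 := hwpow n
          field_simp
          linear_combination (-(p:K)^n') * h9
        rw [h8]
        exact mul_mem hεR (pow_mem (SetLike.coe_mem w) n)
    constructor
    · exact key a b
    · obtain ⟨m, hm⟩ := key (-a) (-b)
      refine ⟨m, ?_⟩
      have h8 : (((ε : ℤ) : K) * (u : K) ^ a * (p : K) ^ b)⁻¹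
          = ((ε : ℤ) : K) * (u : K) ^ (-a) * (p : K) ^ (-b) := by
        rcases hεK with h | h <;> rw [h] <;> simp [mul_inv, zpow_neg] <;> ring
      rw [h8]
      exact hm
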